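/- Let N ≥ 1 and α, β > 0, set C := β(1 + √(1 + α/β)), and define v : ℝ^N → ℝ by v(x) = C e^{‖x‖²} − C. Then v is differentiable everywhere with gradient ∇v(x) = 2 C e^{‖x‖²} x, and v solves the Hamilton–Jacobi–Bellman equation of the academic model problem: for every x ∈ ℝ^N, ⟨∇v(x), x⟩ ‖x‖² − (e^{−‖x‖²} / (4β)) ⟨∇v(x), x⟩² + α e^{‖x‖²} ‖x‖⁴ = 0. Moreover v(x) ≥ 0 for all x with equality exactly at x = 0. -/

import Mathlib

/-- The value function of the academic model problem: with
`C = β(1 + √(1 + α/β))`, the function `v(x) = C e^{‖x‖²} − C` is differentiable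
with gradient `∇v(x) = 2C e^{‖x‖²} x`, solves the Hamilton–Jacobi–Bellman
equation `⟨∇v(x),x⟩‖x‖² − (e^{−‖x‖²}/(4β))⟨∇v(x),x⟩² + α e^{‖x‖²}‖x‖⁴ = 0`,
and is nonnegative, vanishing exactly at `x = 0`. -/
theorem academic_value_function {N : ℕ} (hN : 1 ≤ N) (α β : ℝ)
    (hα : 0 < α) (hβ : 0 < β) :
    let C : ℝ := β * (1 + Real.sqrt (1 + α / β))
    let v : EuclideanSpace ℝ (Fin N) → ℝ := fun x => C * Real.exp (‖x‖ ^ 2) - C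
    let Dv : EuclideanSpace ℝ (Fin N) → EuclideanSpace ℝ (Fin N) :=
      fun x => (2 * C * Real.exp (‖x‖ ^ 2)) • x
    (∀ x, HasGradientAt v (Dv x) x) ∧
    (∀ x, (inner ℝ (Dv x) x : ℝ) * ‖x‖ ^ 2
        - Real.exp (-‖x‖ ^ 2) / (4 * β) * (inner ℝ (Dv x) x : ℝ) ^ 2
        + α * Real.exp (‖x‖ ^ 2) * ‖x‖ ^ 4 = 0) ∧
    (∀ x, 0 ≤ v x) ∧ (∀ x, v x = 0 ↔ x = 0) := by
  intro C v Dv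
  have hs : Real.sqrt (1 + α / β) ^ 2 = 1 + α / β :=
    Real.sq_sqrt (by positivity)
  have hs2 : β ^ 2 * Real.sqrt (1 + α / β) ^ 2 = β ^ 2 + α * β := by
    rw [hs]; field_simp
  have hsq : C ^ 2 = 2 * β * C + α * β := by
    simp only [C]; linear_combination hs2
  have hC : 2 * C - C ^ 2 / β + α = 0 := by
    field_simp
    linarith [hsq]
  have hCpos : 0 < C := by
    have := Real.sqrt_nonneg (1 + α / β)
    simp only [C]; nlinarith
  refine ⟨?_, ?_, ?_, ?_⟩
  · intro x
    have h1 : HasFDerivAt (fun y : EuclideanSpace ℝ (Fin N) => ‖y‖ ^ 2)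
        (2 • (innerSL ℝ x)) x := by
      simpa using (hasFDerivAt_id x).norm_sq
    have h2 : HasFDerivAt v
        ((C * Real.exp (‖x‖ ^ 2)) • (2 • (innerSL ℝ x))) x := by
      have := ((Real.hasDerivAt_exp (‖x‖ ^ 2)).comp_hasFDerivAt x h1)
      simpa [v, smul_smul] using ((this.const_mul C).sub_const C)
    rw [hasGradientAt_iff_hasFDerivAt]
    refine h2.congr_fderiv ?_
    ext y
    simp [Dv, real_inner_smul_left, two_smul]
    ring
  · intro x
    have hi : (inner ℝ (Dv x) x : ℝ) = 2 * C * Real.exp (‖x‖ ^ 2) * ‖x‖ ^ 2 := by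
      simp only [Dv]
      rw [real_inner_smul_left, real_inner_self_eq_norm_sq]
    rw [hi]
    have he : Real.exp (-‖x‖ ^ 2) * Real.exp (‖x‖ ^ 2) = 1 := by
      rw [← Real.exp_add]; simp
    have hβ' : (4 * β) ≠ 0 := by positivity
    linear_combination (Real.exp (‖x‖ ^ 2) * ‖x‖ ^ 4) * hC
      - (C ^ 2 * Real.exp (‖x‖ ^ 2) * ‖x‖ ^ 4 / β) * he
  · intro x
    have : (1 : ℝ) ≤ Real.exp (‖x‖ ^ 2) := Real.one_le_exp (by positivity)
    simp only [v]
    nlinarith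
  · intro x
    simp only [v]
    constructor
    · intro h
      have h1 : Real.exp (‖x‖ ^ 2) = 1 := by
        have h2 : C * (Real.exp (‖x‖ ^ 2) - 1) = 0 := by linarith
        have := (mul_eq_zero.mp h2).resolve_left hCpos.ne'
        linarith
      have h3 : ‖x‖ ^ 2 = 0 := Real.exp_injective (by rw [h1, Real.exp_zero])
      have h4 : ‖x‖ = 0 := by nlinarith [norm_nonneg x]
      exact norm_eq_zero.mp h4
    · intro h; subst h; simp
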